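/- arXiv:2503.19826 — 5 statements merged into one kernel-verified Lean document; each statement's English description precedes it below -/
import Mathlib

section
/- Let H(s) = C(sE - A)^{-1}B be the transfer function of a SISO linear descriptor system with E, A ∈ ℝ^{n×n}, B ∈ ℝ^{n×1}, C ∈ ℝ^{1×n}, and let σ ∈ ℂ be such that σE - A is invertible. If V ∈ ℝ^{n×r} has (σE - A)^{-1}B in its column span, W ∈ ℝ^{n×r} is such that W^T E V and σ(W^T E V) - W^T A V are invertible, and the reduced system is E_r = W^T E V, A_r = W^T A V, B_r = W^T B, C_r = C V with transfer function H_r(s) = C_r(sE_r - A_r)^{-1}B_r, then H(σ) = H_r(σ). -/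
open Matrix

/-- Map a real matrix to a complex matrix entrywise. -/
def cm {α β : Type} (M : Matrix α β ℝ) : Matrix α β ℂ := M.map Complex.ofReal

/-- One-sided rational interpolation: if `(σE - A)⁻¹B` lies in the column span of `V`,
then the Petrov–Galerkin reduced transfer function matches `H` at `σ`. -/
theorem stmt0 {n r : ℕ}
    (E A : Matrix (Fin n) (Fin n) ℝ) (B : Matrix (Fin n) (Fin 1) ℝ)
    (C : Matrix (Fin 1) (Fin n) ℝ) (σ : ℂ)
    (V W : Matrix (Fin n) (Fin r) ℝ)
    (hσ : IsUnit (σ • cm E - cm A))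
    (hspan : ∃ z : Matrix (Fin r) (Fin 1) ℂ,
      (cm V) * z = (σ • cm E - cm A)⁻¹ * cm B)
    (hEr : IsUnit ((cm W)ᵀ * cm E * cm V))
    (hred : IsUnit (σ • ((cm W)ᵀ * cm E * cm V) - (cm W)ᵀ * cm A * cm V)) :
    (cm C) * (σ • cm E - cm A)⁻¹ * cm B
      = (cm C * cm V) *
        (σ • ((cm W)ᵀ * cm E * cm V) - (cm W)ᵀ * cm A * cm V)⁻¹ *
        ((cm W)ᵀ * cm B) := by
  obtain ⟨z, hz⟩ := hspan
  set Kc : Matrix (Fin n) (Fin n) ℂ := σ • cm E - cm A with hKc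
  set Kr : Matrix (Fin r) (Fin r) ℂ :=
    σ • ((cm W)ᵀ * cm E * cm V) - (cm W)ᵀ * cm A * cm V with hKr
  have hfact : Kr = (cm W)ᵀ * Kc * cm V := by
    simp [hKr, hKc, Matrix.mul_sub, Matrix.sub_mul, Matrix.mul_smul,
      Matrix.smul_mul, Matrix.mul_assoc]
  have hKcinv : Kc * Kc⁻¹ = 1 :=
    Matrix.mul_nonsing_inv _ ((Matrix.isUnit_iff_isUnit_det _).mp hσ)
  have hKrz : Kr * z = (cm W)ᵀ * cm B := by
    rw [hfact, Matrix.mul_assoc, Matrix.mul_assoc, hz, ← Matrix.mul_assoc,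
      ← Matrix.mul_assoc, Matrix.mul_assoc _ Kc, hKcinv, Matrix.mul_one]
  have hzeq : z = Kr⁻¹ * ((cm W)ᵀ * cm B) := by
    have hKrinv : Kr⁻¹ * Kr = 1 :=
      Matrix.nonsing_inv_mul _ ((Matrix.isUnit_iff_isUnit_det _).mp hred)
    calc z = Kr⁻¹ * Kr * z := by rw [hKrinv, Matrix.one_mul]
    _ = Kr⁻¹ * ((cm W)ᵀ * cm B) := by rw [Matrix.mul_assoc, hKrz]
  calc cm C * Kc⁻¹ * cm B = cm C * (cm V * z) := by
        rw [Matrix.mul_assoc, ← hz]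
  _ = cm C * cm V * (Kr⁻¹ * ((cm W)ᵀ * cm B)) := by
        rw [← hzeq, ← Matrix.mul_assoc]
  _ = cm C * cm V * Kr⁻¹ * ((cm W)ᵀ * cm B) := by
        simp only [Matrix.mul_assoc]
end

section
/- Let H(s) = C(sE - A)^{-1}B with E, A ∈ ℝ^{n×n}, B ∈ ℝ^{n×1}, C ∈ ℝ^{1×n}, and σ ∈ ℂ with σE - A invertible. If both (σE - A)^{-1}B is in the column span of V and (σE - A)^{-T}C^T is in the column span of W, and σ(W^T E V) - W^T A V is invertible, then the reduced transfer function H_r(s) = CV(s W^T E V - W^T A V)^{-1} W^T B satisfies not only H(σ) = H_r(σ) but also H'(σ) = H_r'(σ) (Hermite interpolation of the derivative). -/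
open Matrix

/-- Two-sided (Hermite) rational interpolation: if `(σE - A)⁻¹B ∈ span V` and
`(σE - A)⁻ᵀCᵀ ∈ span W`, then the reduced transfer function matches `H` and its
derivative `H'(s) = -C(sE-A)⁻¹E(sE-A)⁻¹B` at `σ`. -/
theorem stmt1 {n r : ℕ}
    (E A : Matrix (Fin n) (Fin n) ℝ) (B : Matrix (Fin n) (Fin 1) ℝ)
    (C : Matrix (Fin 1) (Fin n) ℝ) (σ : ℂ)
    (V W : Matrix (Fin n) (Fin r) ℝ)
    (hσ : IsUnit (σ • cm E - cm A))
    (hspanV : ∃ z : Matrix (Fin r) (Fin 1) ℂ,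
      (cm V) * z = (σ • cm E - cm A)⁻¹ * cm B)
    (hspanW : ∃ z : Matrix (Fin r) (Fin 1) ℂ,
      (cm W) * z = ((σ • cm E - cm A)⁻¹)ᵀ * (cm C)ᵀ)
    (hred : IsUnit (σ • ((cm W)ᵀ * cm E * cm V) - (cm W)ᵀ * cm A * cm V)) :
    (cm C) * (σ • cm E - cm A)⁻¹ * cm B
      = (cm C * cm V) *
        (σ • ((cm W)ᵀ * cm E * cm V) - (cm W)ᵀ * cm A * cm V)⁻¹ *
        ((cm W)ᵀ * cm B)
    ∧
    -((cm C) * (σ • cm E - cm A)⁻¹ * cm E * (σ • cm E - cm A)⁻¹ * cm B)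
      = -((cm C * cm V) *
          (σ • ((cm W)ᵀ * cm E * cm V) - (cm W)ᵀ * cm A * cm V)⁻¹ *
          ((cm W)ᵀ * cm E * cm V) *
          (σ • ((cm W)ᵀ * cm E * cm V) - (cm W)ᵀ * cm A * cm V)⁻¹ *
          ((cm W)ᵀ * cm B)) := by
 
  obtain ⟨z₁, hz₁⟩ := hspanV
  obtain ⟨z₂, hz₂⟩ := hspanW
  set K : Matrix (Fin n) (Fin n) ℂ := σ • cm E - cm A with hKdef
  set Kr : Matrix (Fin r) (Fin r) ℂ :=
    σ • ((cm W)ᵀ * cm E * cm V) - (cm W)ᵀ * cm A * cm V with hKrdef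
  have hKr : Kr = (cm W)ᵀ * K * cm V := by
    rw [hKrdef, hKdef]
    simp [Matrix.mul_sub, Matrix.sub_mul, Matrix.mul_smul, Matrix.smul_mul, Matrix.mul_assoc]
  have hdK : IsUnit K.det := (Matrix.isUnit_iff_isUnit_det _).mp hσ
  have hdKr : IsUnit Kr.det := (Matrix.isUnit_iff_isUnit_det _).mp hred
  have h1 : Kr⁻¹ * ((cm W)ᵀ * cm B) = z₁ := by
    have hb : Kr * z₁ = (cm W)ᵀ * cm B := by
      rw [hKr, Matrix.mul_assoc, Matrix.mul_assoc, hz₁, Matrix.mul_nonsing_inv_cancel_left _ _ hdK]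
    rw [← hb, Matrix.nonsing_inv_mul_cancel_left _ _ hdKr]
  have hw : z₂ᵀ * (cm W)ᵀ = cm C * K⁻¹ := by
    have := congrArg Matrix.transpose hz₂
    simpa [Matrix.transpose_mul] using this
  have h2 : cm C * cm V * Kr⁻¹ = z₂ᵀ := by
    have hc : z₂ᵀ * Kr = cm C * cm V := by
      rw [hKr, ← Matrix.mul_assoc, ← Matrix.mul_assoc, hw,
        Matrix.nonsing_inv_mul_cancel_right _ _ hdK]
    rw [← hc, Matrix.mul_nonsing_inv_cancel_right _ _ hdKr]
  constructor
  · calc cm C * K⁻¹ * cm B = cm C * (K⁻¹ * cm B) := Matrix.mul_assoc _ _ _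
      _ = cm C * (cm V * z₁) := by rw [hz₁]
      _ = cm C * cm V * z₁ := (Matrix.mul_assoc _ _ _).symm
      _ = cm C * cm V * (Kr⁻¹ * ((cm W)ᵀ * cm B)) := by rw [h1]
      _ = cm C * cm V * Kr⁻¹ * ((cm W)ᵀ * cm B) := (Matrix.mul_assoc _ _ _).symm
  · congr 1
    calc cm C * K⁻¹ * cm E * K⁻¹ * cm B
        = (cm C * K⁻¹) * cm E * (K⁻¹ * cm B) := by rw [Matrix.mul_assoc]
      _ = z₂ᵀ * (cm W)ᵀ * cm E * (cm V * z₁) := by rw [hw, hz₁]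
      _ = z₂ᵀ * ((cm W)ᵀ * cm E * cm V) * z₁ := by
          simp only [Matrix.mul_assoc]
      _ = (cm C * cm V * Kr⁻¹) * ((cm W)ᵀ * cm E * cm V) *
            (Kr⁻¹ * ((cm W)ᵀ * cm B)) := by rw [h1, h2]
      _ = cm C * cm V * Kr⁻¹ * ((cm W)ᵀ * cm E * cm V) * Kr⁻¹ *
            ((cm W)ᵀ * cm B) := by simp only [Matrix.mul_assoc]
end

section
/- Let H(s) = C(sE - A)^{-1}B be a MIMO transfer function with B ∈ ℝ^{n×m}, C ∈ ℝ^{p×n}, and let σ ∈ ℂ with σE - A invertible, and let b ∈ ℝ^m be a tangent direction. If (σE - A)^{-1}Bb lies in the column span of V ∈ ℝ^{n×r}, and σ W^T E V - W^T A V is invertible, then the reduced transfer function H_r(s) = CV(sW^T E V - W^T A V)^{-1}W^T B satisfies the right tangential interpolation condition H(σ)b = H_r(σ)b. -/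
open Matrix

/-- Map a real vector to a complex vector entrywise. -/
def cv {α : Type} (v : α → ℝ) : α → ℂ := fun i => (v i : ℂ)

/-- Right tangential interpolation: if `(σE - A)⁻¹Bb ∈ span V`, then
`H(σ)b = H_r(σ)b` for the Petrov–Galerkin reduced model. -/
theorem stmt2 {n m p r : ℕ}
    (E A : Matrix (Fin n) (Fin n) ℝ) (B : Matrix (Fin n) (Fin m) ℝ)
    (C : Matrix (Fin p) (Fin n) ℝ) (σ : ℂ) (b : Fin m → ℝ)
    (V W : Matrix (Fin n) (Fin r) ℝ)
    (hσ : IsUnit (σ • cm E - cm A))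
    (hspan : ∃ z : Fin r → ℂ,
      (cm V) *ᵥ z = (σ • cm E - cm A)⁻¹ *ᵥ (cm B *ᵥ cv b))
    (hred : IsUnit (σ • ((cm W)ᵀ * cm E * cm V) - (cm W)ᵀ * cm A * cm V)) :
    (cm C * (σ • cm E - cm A)⁻¹ * cm B) *ᵥ cv b
      = ((cm C * cm V) *
          (σ • ((cm W)ᵀ * cm E * cm V) - (cm W)ᵀ * cm A * cm V)⁻¹ *
          ((cm W)ᵀ * cm B)) *ᵥ cv b := by
  obtain ⟨z, hz⟩ := hspan
  set K : Matrix (Fin n) (Fin n) ℂ := σ • cm E - cm A with hKdef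
  set Kr : Matrix (Fin r) (Fin r) ℂ :=
    σ • ((cm W)ᵀ * cm E * cm V) - (cm W)ᵀ * cm A * cm V with hKrdef
  have hKr : Kr = (cm W)ᵀ * K * cm V := by
    simp [hKrdef, hKdef, Matrix.sub_mul, Matrix.mul_sub, Matrix.mul_smul,
      Matrix.smul_mul]
  -- K *ᵥ (V *ᵥ z) = B *ᵥ b
  have hKV : K *ᵥ (cm V *ᵥ z) = cm B *ᵥ cv b := by
    rw [hz, mulVec_mulVec, mul_nonsing_inv _ ((Matrix.isUnit_iff_isUnit_det _).mp hσ), one_mulVec]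
  have hKrz : Kr *ᵥ z = ((cm W)ᵀ * cm B) *ᵥ cv b := by
    rw [hKr]
    rw [← mulVec_mulVec, ← mulVec_mulVec, hKV, mulVec_mulVec]
  have hzval : Kr⁻¹ *ᵥ (((cm W)ᵀ * cm B) *ᵥ cv b) = z := by
    rw [← hKrz, mulVec_mulVec, nonsing_inv_mul _ ((Matrix.isUnit_iff_isUnit_det _).mp hred), one_mulVec]
  calc (cm C * K⁻¹ * cm B) *ᵥ cv b
      = cm C *ᵥ (K⁻¹ *ᵥ (cm B *ᵥ cv b)) := by
        rw [mulVec_mulVec, mulVec_mulVec]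
    _ = cm C *ᵥ (cm V *ᵥ z) := by rw [hz]
    _ = (cm C * cm V) *ᵥ (Kr⁻¹ *ᵥ (((cm W)ᵀ * cm B) *ᵥ cv b)) := by
        rw [hzval, mulVec_mulVec]
    _ = ((cm C * cm V) * Kr⁻¹ * ((cm W)ᵀ * cm B)) *ᵥ cv b := by
        rw [mulVec_mulVec, mulVec_mulVec]
end

section
/- Let H(s) = C(sE - A)^{-1}B be a MIMO transfer function, σ ∈ ℂ with σE - A invertible, and c ∈ ℝ^p a left tangent direction. If (σE - A)^{-T}C^T c lies in the column span of W ∈ ℝ^{n×r}, and σ W^T E V - W^T A V is invertible, then c^T H(σ) = c^T H_r(σ), where H_r(s) = CV(sW^T E V - W^T A V)^{-1}W^T B. -/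
open Matrix

/-- Left tangential interpolation: if `(σE - A)⁻ᵀCᵀc ∈ span W`, then
`cᵀH(σ) = cᵀH_r(σ)` for the Petrov–Galerkin reduced model. -/
theorem stmt3 {n m p r : ℕ}
    (E A : Matrix (Fin n) (Fin n) ℝ) (B : Matrix (Fin n) (Fin m) ℝ)
    (C : Matrix (Fin p) (Fin n) ℝ) (σ : ℂ) (c : Fin p → ℝ)
    (V W : Matrix (Fin n) (Fin r) ℝ)
    (hσ : IsUnit (σ • cm E - cm A))
    (hspan : ∃ z : Fin r → ℂ,
      (cm W) *ᵥ z = ((σ • cm E - cm A)⁻¹)ᵀ *ᵥ ((cm C)ᵀ *ᵥ cv c))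
    (hred : IsUnit (σ • ((cm W)ᵀ * cm E * cm V) - (cm W)ᵀ * cm A * cm V)) :
    cv c ᵥ* (cm C * (σ • cm E - cm A)⁻¹ * cm B)
      = cv c ᵥ* ((cm C * cm V) *
          (σ • ((cm W)ᵀ * cm E * cm V) - (cm W)ᵀ * cm A * cm V)⁻¹ *
          ((cm W)ᵀ * cm B)) := by
  obtain ⟨z, hz⟩ := hspan
  set K : Matrix (Fin n) (Fin n) ℂ := σ • cm E - cm A with hKdef
  set Kr : Matrix (Fin r) (Fin r) ℂ :=
    σ • ((cm W)ᵀ * cm E * cm V) - (cm W)ᵀ * cm A * cm V with hKrdef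
  have hKdet : IsUnit K.det := (isUnit_iff_isUnit_det K).mp hσ
  have hKrdet : IsUnit Kr.det := (isUnit_iff_isUnit_det Kr).mp hred
  have hKr : Kr = (cm W)ᵀ * K * cm V := by
    rw [hKrdef, hKdef, Matrix.mul_sub, Matrix.sub_mul, Matrix.mul_smul, Matrix.smul_mul]
  -- key identity: cᵀ C = zᵀ Wᵀ K
  have key : cv c ᵥ* cm C = z ᵥ* ((cm W)ᵀ * K) := by
    have h1 : Kᵀ *ᵥ ((cm W) *ᵥ z) = (cm C)ᵀ *ᵥ cv c := by
      rw [hz, Matrix.mulVec_mulVec, Matrix.transpose_nonsing_inv,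
        Matrix.mul_nonsing_inv _ (by simpa using hKdet), Matrix.one_mulVec]
    calc cv c ᵥ* cm C = (cm C)ᵀ *ᵥ cv c := by rw [Matrix.mulVec_transpose]
      _ = Kᵀ *ᵥ ((cm W) *ᵥ z) := h1.symm
      _ = (Kᵀ * cm W) *ᵥ z := by rw [Matrix.mulVec_mulVec]
      _ = ((cm W)ᵀ * K)ᵀ *ᵥ z := by rw [Matrix.transpose_mul, Matrix.transpose_transpose]
      _ = z ᵥ* ((cm W)ᵀ * K) := by rw [Matrix.mulVec_transpose]
  have lhs : cv c ᵥ* (cm C * K⁻¹ * cm B) = z ᵥ* ((cm W)ᵀ * cm B) := by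
    rw [Matrix.mul_assoc, ← Matrix.vecMul_vecMul, key, Matrix.vecMul_vecMul]
    have : (cm W)ᵀ * K * (K⁻¹ * cm B) = (cm W)ᵀ * cm B := by
      rw [Matrix.mul_assoc ((cm W)ᵀ) K, ← Matrix.mul_assoc K,
        Matrix.mul_nonsing_inv _ hKdet, Matrix.one_mul]
    rw [this]
  have rhs : cv c ᵥ* ((cm C * cm V) * Kr⁻¹ * ((cm W)ᵀ * cm B))
      = z ᵥ* ((cm W)ᵀ * cm B) := by
    rw [show (cm C * cm V) * Kr⁻¹ * ((cm W)ᵀ * cm B)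
        = cm C * (cm V * (Kr⁻¹ * ((cm W)ᵀ * cm B))) by
      simp only [Matrix.mul_assoc]]
    rw [← Matrix.vecMul_vecMul, key, Matrix.vecMul_vecMul]
    have : (cm W)ᵀ * K * (cm V * (Kr⁻¹ * ((cm W)ᵀ * cm B))) = (cm W)ᵀ * cm B := by
      rw [show (cm W)ᵀ * K * (cm V * (Kr⁻¹ * ((cm W)ᵀ * cm B)))
          = ((cm W)ᵀ * K * cm V) * Kr⁻¹ * ((cm W)ᵀ * cm B) by
        simp only [Matrix.mul_assoc], ← hKr,
        Matrix.mul_nonsing_inv _ hKrdet, Matrix.one_mul]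
    rw [this]
  rw [lhs, rhs]
end

section
/- If the tangential IRKA iteration converges, i.e., the interpolation points {σ_1,…,σ_r} equal the mirrored eigenvalues {-λ_1(A_r E_r^{-1}),…,-λ_r(A_r E_r^{-1})} of the reduced pencil, then the reduced transfer function H_r interpolates H at the reflected reduced poles: H(-λ_i)b_i = H_r(-λ_i)b_i, c_i^T H(-λ_i) = c_i^T H_r(-λ_i), and c_i^T H'(-λ_i) b_i = c_i^T H_r'(-λ_i) b_i, for tangent directions b_i, c_i given by the right and left eigenvector residues of H_r. -/
open Matrix

/-- IRKA fixed-point property: upon convergence of tangential IRKA the interpolation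
points are the mirror images `-λ i` of the eigenvalues of the reduced pencil
`A_r E_r⁻¹`, and the projection bases contain the corresponding tangential rational
Krylov directions.  Then the reduced transfer function
`H_r(s) = C_r(sE_r - A_r)⁻¹B_r` Hermite-tangentially interpolates
`H(s) = C(sE - A)⁻¹B` at the reflected reduced poles along the tangent directions
`b i`, `c i`  (with `H'(s) = -C(sE-A)⁻¹E(sE-A)⁻¹B`). -/
theorem stmt5 {n m p r : ℕ}
    (E A : Matrix (Fin n) (Fin n) ℂ) (B : Matrix (Fin n) (Fin m) ℂ)
    (C : Matrix (Fin p) (Fin n) ℂ)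
    (V W : Matrix (Fin n) (Fin r) ℂ)
    (lam : Fin r → ℂ) (b : Fin r → Fin m → ℂ) (c : Fin r → Fin p → ℂ)
    (hEr : IsUnit (Wᵀ * E * V))
    (hconv : ∀ i, lam i ∈ spectrum ℂ ((Wᵀ * A * V) * (Wᵀ * E * V)⁻¹))
    (hσ : ∀ i, IsUnit ((-lam i) • E - A))
    (hσr : ∀ i, IsUnit ((-lam i) • (Wᵀ * E * V) - Wᵀ * A * V))
    (hspanV : ∀ i, ∃ z : Fin r → ℂ,
      V *ᵥ z = ((-lam i) • E - A)⁻¹ *ᵥ (B *ᵥ b i))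
    (hspanW : ∀ i, ∃ z : Fin r → ℂ,
      W *ᵥ z = (((-lam i) • E - A)⁻¹)ᵀ *ᵥ (Cᵀ *ᵥ c i)) :
    ∀ i,
      ((C * ((-lam i) • E - A)⁻¹ * B) *ᵥ b i
        = ((C * V) * ((-lam i) • (Wᵀ * E * V) - Wᵀ * A * V)⁻¹ * (Wᵀ * B)) *ᵥ b i)
      ∧
      (c i ᵥ* (C * ((-lam i) • E - A)⁻¹ * B)
        = c i ᵥ* ((C * V) * ((-lam i) • (Wᵀ * E * V) - Wᵀ * A * V)⁻¹ * (Wᵀ * B)))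
      ∧
      (c i ᵥ* (-(C * ((-lam i) • E - A)⁻¹ * E * ((-lam i) • E - A)⁻¹ * B)) ⬝ᵥ b i
        = c i ᵥ* (-((C * V) * ((-lam i) • (Wᵀ * E * V) - Wᵀ * A * V)⁻¹ *
            (Wᵀ * E * V) * ((-lam i) • (Wᵀ * E * V) - Wᵀ * A * V)⁻¹ * (Wᵀ * B))) ⬝ᵥ b i) := by
  intro i
  set K : Matrix (Fin n) (Fin n) ℂ := (-lam i) • E - A with hKdef
  set Kr : Matrix (Fin r) (Fin r) ℂ := (-lam i) • (Wᵀ * E * V) - Wᵀ * A * V with hKrdef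
  have hKdet : IsUnit K.det := (Matrix.isUnit_iff_isUnit_det K).mp (hσ i)
  have hKrdet : IsUnit Kr.det := (Matrix.isUnit_iff_isUnit_det Kr).mp (hσr i)
  have hKtdet : IsUnit Kᵀ.det := by rwa [Matrix.det_transpose]
  have hKrtdet : IsUnit Krᵀ.det := by rwa [Matrix.det_transpose]
  have hKr : Kr = Wᵀ * K * V := by
    simp [hKrdef, hKdef, Matrix.mul_sub, Matrix.sub_mul, Matrix.mul_smul,
      Matrix.smul_mul, Matrix.mul_assoc]
  obtain ⟨z, hz⟩ := hspanV i
  obtain ⟨y, hy⟩ := hspanW i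
  have hKx : K *ᵥ (V *ᵥ z) = B *ᵥ b i := by
    rw [hz, Matrix.mulVec_mulVec, Matrix.mul_nonsing_inv K hKdet, Matrix.one_mulVec]
  have hKrz : Kr *ᵥ z = Wᵀ *ᵥ (B *ᵥ b i) := by
    rw [hKr, Matrix.mul_assoc, ← Matrix.mulVec_mulVec, ← Matrix.mulVec_mulVec, hKx]
  have hz2 : z = Kr⁻¹ *ᵥ (Wᵀ *ᵥ (B *ᵥ b i)) := by
    rw [← hKrz, Matrix.mulVec_mulVec, Matrix.nonsing_inv_mul Kr hKrdet, Matrix.one_mulVec]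
  have hKty : Kᵀ *ᵥ (W *ᵥ y) = Cᵀ *ᵥ c i := by
    rw [hy, Matrix.transpose_nonsing_inv, Matrix.mulVec_mulVec,
      Matrix.mul_nonsing_inv _ hKtdet, Matrix.one_mulVec]
  have hKrT : Krᵀ = Vᵀ * Kᵀ * W := by
    rw [hKr, Matrix.transpose_mul, Matrix.transpose_mul, Matrix.transpose_transpose,
      Matrix.mul_assoc]
  have hKrty : Krᵀ *ᵥ y = Vᵀ *ᵥ (Cᵀ *ᵥ c i) := by
    rw [hKrT, Matrix.mul_assoc, ← Matrix.mulVec_mulVec, ← Matrix.mulVec_mulVec, hKty]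
  have hy2 : y = (Krᵀ)⁻¹ *ᵥ (Vᵀ *ᵥ (Cᵀ *ᵥ c i)) := by
    rw [← hKrty, Matrix.mulVec_mulVec, Matrix.nonsing_inv_mul _ hKrtdet, Matrix.one_mulVec]
  have hw2 : (Kᵀ)⁻¹ *ᵥ (Cᵀ *ᵥ c i) = W *ᵥ y := by
    rw [← hKty, Matrix.mulVec_mulVec, Matrix.nonsing_inv_mul _ hKtdet, Matrix.one_mulVec]
  -- key vecMul facts
  have hcw : c i ᵥ* (C * K⁻¹) = (W *ᵥ y) := by
    rw [← Matrix.mulVec_transpose, Matrix.transpose_mul, Matrix.transpose_nonsing_inv,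
      ← Matrix.mulVec_mulVec, hw2]
  have hcr : c i ᵥ* (C * V * Kr⁻¹) = y := by
    rw [← Matrix.mulVec_transpose, Matrix.transpose_mul, Matrix.transpose_mul,
      Matrix.transpose_nonsing_inv, ← Matrix.mulVec_mulVec, ← Matrix.mulVec_mulVec, ← hy2]
  refine ⟨?_, ?_, ?_⟩
  · -- right tangential interpolation
    calc (C * K⁻¹ * B) *ᵥ b i
        = C *ᵥ (K⁻¹ *ᵥ (B *ᵥ b i)) := by
          rw [Matrix.mulVec_mulVec, Matrix.mulVec_mulVec]
      _ = C *ᵥ (V *ᵥ z) := by rw [hz]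
      _ = C *ᵥ (V *ᵥ (Kr⁻¹ *ᵥ (Wᵀ *ᵥ (B *ᵥ b i)))) := by rw [← hz2]
      _ = (C * V * Kr⁻¹ * (Wᵀ * B)) *ᵥ b i := by
          rw [Matrix.mulVec_mulVec, Matrix.mulVec_mulVec, Matrix.mulVec_mulVec,
            Matrix.mulVec_mulVec, Matrix.mul_assoc (C * V * Kr⁻¹) Wᵀ B,
            Matrix.mul_assoc (C * V) Kr⁻¹ (Wᵀ * B)]
  · -- left tangential interpolation
    calc c i ᵥ* (C * K⁻¹ * B)
        = (c i ᵥ* (C * K⁻¹)) ᵥ* B := by rw [Matrix.vecMul_vecMul]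
      _ = (W *ᵥ y) ᵥ* B := by rw [hcw]
      _ = (c i ᵥ* (C * V * Kr⁻¹)) ᵥ* Wᵀ ᵥ* B := by
          rw [hcr, Matrix.vecMul_transpose]
      _ = c i ᵥ* (C * V * Kr⁻¹ * (Wᵀ * B)) := by
          rw [Matrix.vecMul_vecMul, Matrix.vecMul_vecMul, Matrix.mul_assoc]
  · -- Hermite (derivative) condition
    rw [Matrix.vecMul_neg, Matrix.vecMul_neg, neg_dotProduct, neg_dotProduct,
      neg_inj]
    calc c i ᵥ* (C * K⁻¹ * E * K⁻¹ * B) ⬝ᵥ b i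
        = ((c i ᵥ* (C * K⁻¹)) ᵥ* E) ⬝ᵥ (K⁻¹ *ᵥ (B *ᵥ b i)) := by
          conv_rhs => rw [Matrix.vecMul_vecMul, Matrix.mulVec_mulVec,
            Matrix.dotProduct_mulVec, Matrix.vecMul_vecMul]
          rw [Matrix.mul_assoc (C * K⁻¹ * E) K⁻¹ B]
      _ = ((W *ᵥ y) ᵥ* E) ⬝ᵥ (V *ᵥ z) := by rw [hcw, hz]
      _ = (((W *ᵥ y) ᵥ* E) ᵥ* V) ⬝ᵥ z := by rw [Matrix.dotProduct_mulVec]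
      _ = ((y ᵥ* Wᵀ ᵥ* E) ᵥ* V) ⬝ᵥ (Kr⁻¹ *ᵥ (Wᵀ *ᵥ (B *ᵥ b i))) := by
          rw [Matrix.vecMul_transpose, ← hz2]
      _ = c i ᵥ* (C * V * Kr⁻¹ * (Wᵀ * E * V) * Kr⁻¹ * (Wᵀ * B)) ⬝ᵥ b i := by
          rw [← hcr, Matrix.vecMul_vecMul, Matrix.vecMul_vecMul, Matrix.vecMul_vecMul,
            Matrix.mulVec_mulVec, Matrix.mulVec_mulVec, Matrix.dotProduct_mulVec,
            Matrix.vecMul_vecMul]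
          simp only [Matrix.mul_assoc]
end
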